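/- arXiv:2506.18616 — 3 statements merged into one kernel-verified Lean document; each statement's English description precedes it below -/
import Mathlib

section
/- Let (X_i, A_i, μ_i)_{i∈ι} be an arbitrary family of probability spaces. Then there exists a unique probability measure ⊗_{i∈ι} μ_i on the product measurable space (∏_{i∈ι} X_i, ⊗_{i∈ι} A_i) such that for every finite subset I ⊆ ι, the pushforward of ⊗_{i∈ι} μ_i under the canonical projection π_I : ∏_{i∈ι} X_i → ∏_{i∈I} X_i equals the finite product measure ⊗_{i∈I} μ_i. -/
open MeasureTheory ProbabilityTheory Preorder Filter
open scoped ENNReal ProbabilityTheory Topology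

open Set Function
set_option linter.unusedSectionVars false

namespace ExistsUniqueProductMeasureAux

variable {ι : Type*} {X : ι → Type*} [∀ i, MeasurableSpace (X i)] [DecidableEq ι]
  (μ : ∀ i, Measure (X i)) [∀ i, IsProbabilityMeasure (μ i)]

include μ in
lemma nonempty_pi : Nonempty (Π i, X i) := by
  have : ∀ i, Nonempty (X i) := fun i => (μ i).nonempty_of_neZero
  exact ⟨fun i => (this i).some⟩

/-- Indicators of cylinders depend only on the base coordinates. -/
lemma indicator_cyl_dep {I : Finset ι} {S : Set (Π i : I, X i)} (x y : Π i, X i)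
    (hxy : ∀ i ∈ I, x i = y i) :
    (cylinder I S).indicator (1 : (Π i, X i) → ℝ≥0∞) x = (cylinder I S).indicator 1 y := by
  have hr : I.restrict x = I.restrict y := funext fun j => hxy j j.2
  have hiff : x ∈ cylinder I S ↔ y ∈ cylinder I S := by
    rw [mem_cylinder, mem_cylinder, hr]
  by_cases h : y ∈ cylinder I S <;> simp [Set.indicator_apply, hiff, h]

/-- Marginalizing a function that depends only on coordinates in `A` over a disjoint
finset `t` of coordinates does nothing (for probability measures). -/
lemma lmarginal_eq_self_of_disjoint {A t : Finset ι} (hd : Disjoint A t)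
    {f : (Π i, X i) → ℝ≥0∞} (hdep : ∀ x y : Π i, X i, (∀ i ∈ A, x i = y i) → f x = f y) :
    ∫⋯∫⁻_t, f ∂μ = f := by
  ext x
  rw [lmarginal]
  have h : ∀ y : Π i : t, X i, f (updateFinset x t y) = f x := by
    intro y
    refine (hdep _ _ fun i hi => ?_).symm
    have : i ∉ t := Finset.disjoint_left.mp hd hi
    simp [updateFinset, this]
  simp_rw [h]
  simp

lemma lmarg_cyl_self {I : Finset ι} {S : Set (Π i : I, X i)} (hS : MeasurableSet S)
    (x : Π i, X i) :
    (∫⋯∫⁻_I, (cylinder I S).indicator 1 ∂μ) x = Measure.pi (fun i : I ↦ μ i) S := by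
  rw [lmarginal]
  have h : ∀ y : Π i : I, X i,
      (cylinder I S).indicator (1 : (Π i, X i) → ℝ≥0∞) (updateFinset x I y)
        = S.indicator 1 y := by
    intro y
    have hr : I.restrict (updateFinset x I y) = y := by
      funext j
      simp [Finset.restrict, updateFinset, j.2]
    have hiff : updateFinset x I y ∈ cylinder I S ↔ y ∈ S := by rw [mem_cylinder, hr]
    by_cases h : y ∈ S <;> simp [Set.indicator_apply, hiff, h]
  simp_rw [h]
  rw [lintegral_indicator_one hS]

lemma lmarginal_indicator_cylinder {I J : Finset ι} (hIJ : I ⊆ J) {S : Set (Π i : I, X i)}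
    (hS : MeasurableSet S) (x : Π i, X i) :
    (∫⋯∫⁻_J, (cylinder I S).indicator 1 ∂μ) x = Measure.pi (fun i : I ↦ μ i) S := by
  have hmf : Measurable ((cylinder I S).indicator (1 : (Π i, X i) → ℝ≥0∞)) :=
    measurable_one.indicator (hS.cylinder _)
  have hdisj : Disjoint I (J \ I) := Finset.disjoint_sdiff
  calc (∫⋯∫⁻_J, (cylinder I S).indicator 1 ∂μ) x
      = (∫⋯∫⁻_(I ∪ (J \ I)), (cylinder I S).indicator 1 ∂μ) x := by
        rw [Finset.union_sdiff_of_subset hIJ]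
    _ = (∫⋯∫⁻_I, ∫⋯∫⁻_(J \ I), (cylinder I S).indicator 1 ∂μ ∂μ) x := by
        rw [lmarginal_union μ _ hmf hdisj]
    _ = (∫⋯∫⁻_I, (cylinder I S).indicator 1 ∂μ) x := by
        rw [lmarginal_eq_self_of_disjoint μ hdisj (indicator_cyl_dep)]
    _ = Measure.pi (fun i : I ↦ μ i) S := lmarg_cyl_self μ hS x

open scoped Classical in
/-- The content of a measurable cylinder: value of the finite product measure on (a choice of)
base set. -/
noncomputable def cCon (v : Set (Π i, X i)) : ℝ≥0∞ :=
  if hv : v ∈ measurableCylinders X then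
    Measure.pi (fun i : (measurableCylinders.finset hv) ↦ μ i) (measurableCylinders.set hv)
  else 0

include μ in
lemma cCon_eq {I : Finset ι} {S : Set (Π i : I, X i)} (hS : MeasurableSet S) :
    cCon μ (cylinder I S) = Measure.pi (fun i : I ↦ μ i) S := by
  obtain ⟨x⟩ := nonempty_pi μ
  have hv : cylinder I S ∈ measurableCylinders X := cylinder_mem_measurableCylinders _ _ hS
  rw [cCon, dif_pos hv]
  set J₁ := measurableCylinders.finset hv
  set S₁ := measurableCylinders.set hv
  have h₁ : cylinder I S = cylinder J₁ S₁ := measurableCylinders.eq_cylinder hv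
  have hS₁ : MeasurableSet S₁ := measurableCylinders.measurableSet hv
  calc Measure.pi (fun i : J₁ ↦ μ i) S₁
      = (∫⋯∫⁻_(J₁ ∪ I), (cylinder J₁ S₁).indicator 1 ∂μ) x :=
        (lmarginal_indicator_cylinder μ Finset.subset_union_left hS₁ x).symm
    _ = (∫⋯∫⁻_(J₁ ∪ I), (cylinder I S).indicator 1 ∂μ) x := by rw [h₁]
    _ = Measure.pi (fun i : I ↦ μ i) S :=
        lmarginal_indicator_cylinder μ Finset.subset_union_right hS x

include μ in
lemma cCon_eq_lmarg {J : Finset ι} {S : Set (Π i : J, X i)} (hS : MeasurableSet S)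
    (x : Π i, X i) :
    cCon μ (cylinder J S) = (∫⋯∫⁻_J, (cylinder J S).indicator 1 ∂μ) x := by
  rw [cCon_eq μ hS, lmarginal_indicator_cylinder μ (subset_refl J) hS x]

include μ in
lemma cCon_empty : cCon μ (∅ : Set (Π i, X i)) = 0 := by
  have := cCon_eq μ (I := (∅ : Finset ι)) (S := (∅ : Set (Π i : (∅ : Finset ι), X i)))
    MeasurableSet.empty
  rwa [cylinder_empty, measure_empty] at this

include μ in
lemma cCon_univ : cCon μ (univ : Set (Π i, X i)) = 1 := by
  have := cCon_eq μ (I := (∅ : Finset ι)) (S := (univ : Set (Π i : (∅ : Finset ι), X i)))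
    MeasurableSet.univ
  rwa [cylinder_univ, measure_univ] at this

lemma cylinder_eq_of_subset {I J : Finset ι} (hIJ : I ⊆ J) (S : Set (Π i : I, X i)) :
    cylinder I S = cylinder J (Finset.restrict₂ (π := X) hIJ ⁻¹' S) := by
  rw [cylinder, cylinder, ← Set.preimage_comp, Finset.restrict₂_comp_restrict hIJ]

/-- A common representation of two measurable cylinders over the same finset. -/
lemma exists_common_rep {v w : Set (Π i, X i)} (hv : v ∈ measurableCylinders X)
    (hw : w ∈ measurableCylinders X) :
    ∃ (J : Finset ι) (S T : Set (Π i : J, X i)), MeasurableSet S ∧ MeasurableSet T ∧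
      v = cylinder J S ∧ w = cylinder J T := by
  obtain ⟨I₁, S₁, hS₁, rfl⟩ := (mem_measurableCylinders v).1 hv
  obtain ⟨I₂, S₂, hS₂, rfl⟩ := (mem_measurableCylinders w).1 hw
  have hm : Measurable (Finset.restrict₂ (π := X) (Finset.subset_union_left (s₁ := I₁) (s₂ := I₂))) :=
    Finset.measurable_restrict₂ _
  have hm' : Measurable (Finset.restrict₂ (π := X) (Finset.subset_union_right (s₁ := I₁) (s₂ := I₂))) :=
    Finset.measurable_restrict₂ _
  exact ⟨I₁ ∪ I₂, Finset.restrict₂ Finset.subset_union_left ⁻¹' S₁,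
    Finset.restrict₂ Finset.subset_union_right ⁻¹' S₂, hm hS₁, hm' hS₂,
    cylinder_eq_of_subset Finset.subset_union_left S₁,
    cylinder_eq_of_subset Finset.subset_union_right S₂⟩

include μ in
lemma cCon_mono {v w : Set (Π i, X i)} (hv : v ∈ measurableCylinders X)
    (hw : w ∈ measurableCylinders X) (hvw : v ⊆ w) : cCon μ v ≤ cCon μ w := by
  obtain ⟨x⟩ := nonempty_pi μ
  obtain ⟨J, S, T, hS, hT, rfl, rfl⟩ := exists_common_rep hv hw
  rw [cCon_eq_lmarg μ hS x, cCon_eq_lmarg μ hT x]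
  exact lmarginal_mono (Set.indicator_le_indicator_of_subset hvw (fun _ => zero_le)) x

include μ in
lemma cCon_union_of_disjoint {v w : Set (Π i, X i)} (hv : v ∈ measurableCylinders X)
    (hw : w ∈ measurableCylinders X) (hd : Disjoint v w) :
    cCon μ (v ∪ w) = cCon μ v + cCon μ w := by
  obtain ⟨x⟩ := nonempty_pi μ
  obtain ⟨J, S, T, hS, hT, rfl, rfl⟩ := exists_common_rep hv hw
  rw [union_cylinder_same _ _ _]
  rw [cCon_eq_lmarg μ (hS.union hT) x, cCon_eq_lmarg μ hS x, cCon_eq_lmarg μ hT x]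
  rw [← union_cylinder_same]
  have hind : (cylinder J S ∪ cylinder J T).indicator (1 : (Π i, X i) → ℝ≥0∞)
      = (cylinder J S).indicator 1 + (cylinder J T).indicator 1 :=
    Set.indicator_union_of_disjoint hd 1
  rw [lmarginal, lmarginal, lmarginal]
  simp_rw [hind, Pi.add_apply]
  exact lintegral_add_left
    ((measurable_one.indicator (hS.cylinder _)).comp measurable_updateFinset) _

include μ in
lemma cCon_union_le {v w : Set (Π i, X i)} (hv : v ∈ measurableCylinders X)
    (hw : w ∈ measurableCylinders X) :
    cCon μ (v ∪ w) ≤ cCon μ v + cCon μ w := by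
  obtain ⟨x⟩ := nonempty_pi μ
  obtain ⟨J, S, T, hS, hT, rfl, rfl⟩ := exists_common_rep hv hw
  rw [union_cylinder_same _ _ _]
  rw [cCon_eq_lmarg μ (hS.union hT) x, cCon_eq_lmarg μ hS x, cCon_eq_lmarg μ hT x]
  rw [← union_cylinder_same]
  have hind : (cylinder J S ∪ cylinder J T).indicator (1 : (Π i, X i) → ℝ≥0∞)
      ≤ (cylinder J S).indicator 1 + (cylinder J T).indicator 1 := by
    intro z
    by_cases h1 : z ∈ cylinder J S <;> by_cases h2 : z ∈ cylinder J T <;>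
      simp [Set.indicator_apply, h1, h2]
  calc (∫⋯∫⁻_J, (cylinder J S ∪ cylinder J T).indicator 1 ∂μ) x
      ≤ (∫⋯∫⁻_J, ((cylinder J S).indicator 1 + (cylinder J T).indicator 1) ∂μ) x :=
        lmarginal_mono hind x
    _ = (∫⋯∫⁻_J, (cylinder J S).indicator 1 ∂μ) x
        + (∫⋯∫⁻_J, (cylinder J T).indicator 1 ∂μ) x := by
        rw [lmarginal, lmarginal, lmarginal]
        simp_rw [Pi.add_apply]
        exact lintegral_add_left
          ((measurable_one.indicator (hS.cylinder _)).comp measurable_updateFinset) _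

include μ in
/-- Core lemma: the cylinder content is continuous at `∅` along decreasing sequences. -/
lemma tendsto_cCon_zero (w : ℕ → Set (Π i, X i)) (hw : ∀ n, w n ∈ measurableCylinders X)
    (hanti : Antitone w) (hempty : ⋂ n, w n = ∅) :
    Filter.Tendsto (fun n ↦ cCon μ (w n)) Filter.atTop (𝓝 0) := by
  classical
  have hmono : Antitone fun n => cCon μ (w n) :=
    fun a b hab => cCon_mono μ (hw b) (hw a) (hanti hab)
  have htend : Filter.Tendsto (fun n ↦ cCon μ (w n)) Filter.atTop (𝓝 (⨅ n, cCon μ (w n))) :=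
    tendsto_atTop_iInf hmono
  suffices h0 : (⨅ n, cCon μ (w n)) = 0 by rwa [h0] at htend
  by_contra hne
  set ε := ⨅ n, cCon μ (w n) with hεdef
  have hεpos : 0 < ε := pos_iff_ne_zero.mpr hne
  have hε : ∀ n, ε ≤ cCon μ (w n) := fun n => iInf_le _ n
  -- choose representations
  choose I S hS hwS using fun n => (mem_measurableCylinders (w n)).1 (hw n)
  -- growing coordinate sets
  set K : ℕ → Finset ι := fun n => (Finset.range n).biUnion I with hK
  have hK0 : K 0 = ∅ := rfl
  have hKmono : Monotone K := fun a b hab =>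
    Finset.biUnion_subset_biUnion_of_subset_left _ (Finset.range_subset_range.mpr hab)
  have hIK : ∀ n, I n ⊆ K (n + 1) := fun n =>
    Finset.subset_biUnion_of_mem _ (Finset.self_mem_range_succ n)
  -- the indicator functions
  set f : ℕ → (Π i, X i) → ℝ≥0∞ := fun n => (w n).indicator 1 with hf
  have hfm : ∀ n, Measurable (f n) := fun n =>
    measurable_one.indicator (MeasurableSet.of_mem_measurableCylinders (hw n))
  have hf1 : ∀ n x, f n x ≤ 1 := by
    intro n x
    by_cases h : x ∈ w n <;> simp [hf, Set.indicator_apply, h]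
  have hfa : ∀ {a b : ℕ}, a ≤ b → ∀ x, f b x ≤ f a x := fun {a b} hab =>
    Set.indicator_le_indicator_of_subset (hanti hab) (fun _ => zero_le)
  have hdep : ∀ n (x y : Π i, X i), (∀ i ∈ I n, x i = y i) → f n x = f n y := by
    intro n x y hxy
    simp only [hf, hwS n]
    exact indicator_cyl_dep x y hxy
  -- conditional contents
  set h : ℕ → ℕ → (Π i, X i) → ℝ≥0∞ := fun m n => ∫⋯∫⁻_(K (n + 1) \ K m), f n ∂μ with hh
  have hmm : ∀ m n, Measurable (h m n) := fun m n => (hfm n).lmarginal μ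
  have hh1 : ∀ m n x, h m n x ≤ 1 := by
    intro m n x
    calc h m n x ≤ (∫⋯∫⁻_(K (n + 1) \ K m), (fun _ => 1) ∂μ) x :=
          lmarginal_mono (fun z => hf1 n z) x
      _ = 1 := by rw [lmarginal]; simp
  -- absorption : marginalizing `f n` over coordinates outside `I n` does nothing
  have habs : ∀ (n : ℕ) (t : Finset ι), Disjoint (I n) t → (∫⋯∫⁻_t, f n ∂μ) = f n :=
    fun n t hd => lmarginal_eq_self_of_disjoint μ hd (hdep n)
  -- tower property
  have hsplit : ∀ {m₁ m₂ n : ℕ}, m₁ ≤ m₂ → m₂ ≤ n + 1 →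
      h m₁ n = ∫⋯∫⁻_(K m₂ \ K m₁), h m₂ n ∂μ := by
    intro m₁ m₂ n h12 h2n
    have hd : Disjoint (K m₂ \ K m₁) (K (n + 1) \ K m₂) := by
      rw [Finset.disjoint_left]
      intro a ha hb
      exact (Finset.mem_sdiff.mp hb).2 (Finset.mem_sdiff.mp ha).1
    have hu : (K m₂ \ K m₁) ∪ (K (n + 1) \ K m₂) = K (n + 1) \ K m₁ := by
      rw [Finset.union_comm]
      exact Finset.sdiff_union_sdiff_cancel (hKmono h2n) (hKmono h12)
    rw [hh]
    simp only
    rw [← hu, lmarginal_union μ (f n) (hfm n) hd]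
  -- antitonicity in `n`
  have hanti' : ∀ {m n : ℕ}, m ≤ n + 1 → ∀ x, h m (n + 1) x ≤ h m n x := by
    intro m n hm x
    have hd : Disjoint (K (n + 2) \ K (n + 1)) (K (n + 1) \ K m) := by
      rw [Finset.disjoint_left]
      intro a ha hb
      exact (Finset.mem_sdiff.mp ha).2 (Finset.mem_sdiff.mp hb).1
    have hu : (K (n + 1) \ K m) ∪ (K (n + 2) \ K (n + 1)) = K (n + 2) \ K m := by
      rw [Finset.union_comm]
      exact Finset.sdiff_union_sdiff_cancel (hKmono (Nat.le_succ (n + 1))) (hKmono hm)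
    have hdisj2 : Disjoint (I n) (K (n + 2) \ K (n + 1)) := by
      rw [Finset.disjoint_left]
      intro a ha hb
      exact (Finset.mem_sdiff.mp hb).2 (hIK n ha)
    calc h m (n + 1) x ≤ (∫⋯∫⁻_(K (n + 2) \ K m), f n ∂μ) x :=
          lmarginal_mono (hfa (Nat.le_succ n)) x
      _ = (∫⋯∫⁻_((K (n + 1) \ K m) ∪ (K (n + 2) \ K (n + 1))), f n ∂μ) x := by rw [hu]
      _ = (∫⋯∫⁻_(K (n + 1) \ K m), ∫⋯∫⁻_(K (n + 2) \ K (n + 1)), f n ∂μ ∂μ) x := by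
          rw [lmarginal_union μ (f n) (hfm n) hd.symm]
      _ = h m n x := by rw [habs n _ hdisj2]
  have hantiN : ∀ {m a b : ℕ}, m ≤ a + 1 → a ≤ b → ∀ x, h m b x ≤ h m a x := by
    intro m a b hm hab
    induction b, hab using Nat.le_induction with
    | base => exact fun x => le_rfl
    | succ b hb ih => exact fun x => (hanti' (by omega) x).trans (ih x)
  -- base value
  have hbase : ∀ n x, h 0 n x = cCon μ (w n) := by
    intro n x
    have hKe : K (n + 1) \ K 0 = K (n + 1) := by rw [hK0, Finset.sdiff_empty]
    calc h 0 n x = (∫⋯∫⁻_(K (n + 1)), (cylinder (I n) (S n)).indicator 1 ∂μ) x := by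
          rw [hh]; simp only; rw [hKe, hf]; simp only; rw [hwS n]
      _ = Measure.pi (fun i : I n ↦ μ i) (S n) :=
          lmarginal_indicator_cylinder μ (hIK n) (hS n) x
      _ = cCon μ (w n) := by rw [hwS n, cCon_eq μ (hS n)]
  -- the limiting functions
  set H : ℕ → (Π i, X i) → ℝ≥0∞ := fun m x => ⨅ n, h m (n + m) x with hH
  have hHle : ∀ m x n, H m x ≤ h m (n + m) x := fun m x n => iInf_le _ n
  have hHlb : ∀ x, ε ≤ H 0 x := by
    intro x
    refine le_iInf fun n => ?_
    rw [hbase (n + 0) x]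
    exact hε (n + 0)
  -- the recursion identity
  have hHrec : ∀ m x, H m x = ∫⁻ y, H (m + 1) (updateFinset x (K (m + 1) \ K m) y)
      ∂(Measure.pi fun i : (K (m + 1) \ K m : Finset ι) ↦ μ i) := by
    intro m x
    have e1 : H m x = ⨅ n, h m (n + m + 1) x := by
      refine le_antisymm (le_iInf fun n => ?_) (le_iInf fun n => ?_)
      · refine (hHle m x (n + 1)).trans (le_of_eq ?_)
        rw [show n + 1 + m = n + m + 1 by omega]
      · exact (iInf_le (fun k => h m (k + m + 1) x) n).trans (hantiN (by omega) (by omega) x)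
    have e2 : ∀ n : ℕ, h m (n + m + 1) x = ∫⁻ y, h (m + 1) (n + m + 1)
        (updateFinset x (K (m + 1) \ K m) y)
        ∂(Measure.pi fun i : (K (m + 1) \ K m : Finset ι) ↦ μ i) := by
      intro n
      rw [hsplit (Nat.le_succ m) (by omega)]
      rfl
    have e3 : ∀ z, H (m + 1) z = ⨅ n, h (m + 1) (n + m + 1) z := by
      intro z
      rw [hH]
      exact iInf_congr fun n => by rw [show n + (m + 1) = n + m + 1 by omega]
    rw [e1]
    simp_rw [e2, e3]
    rw [lintegral_iInf]
    · exact fun n => (hmm (m + 1) (n + m + 1)).comp measurable_updateFinset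
    · intro a b hab
      exact fun y => hantiN (by omega) (by omega) _
    · refine ne_top_of_le_ne_top ENNReal.one_ne_top ?_
      refine le_trans (lintegral_mono fun y => hh1 _ _ _) ?_
      simp
  -- recursive construction of a point in the intersection
  obtain ⟨x₀⟩ := nonempty_pi μ
  have step : ∀ (m : ℕ) (x : Π i, X i), 0 < H m x →
      ∃ y, 0 < H (m + 1) (updateFinset x (K (m + 1) \ K m) y) := by
    intro m x hx
    by_contra hcon
    push_neg at hcon
    have hzero : ∀ y, H (m + 1) (updateFinset x (K (m + 1) \ K m) y) = 0 :=
      fun y => le_antisymm (hcon y) (zero_le)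
    rw [hHrec m x] at hx
    simp_rw [hzero] at hx
    simp at hx
  set seq : ℕ → (Π i, X i) := fun m => Nat.rec x₀ (fun m xm =>
    if hp : 0 < H m xm then
      updateFinset xm (K (m + 1) \ K m) (Classical.choose (step m xm hp))
    else xm) m with hseq
  have hseqsucc : ∀ m, seq (m + 1) = if hp : 0 < H m (seq m) then
      updateFinset (seq m) (K (m + 1) \ K m) (Classical.choose (step m (seq m) hp))
    else seq m := fun m => rfl
  have hpos : ∀ m, 0 < H m (seq m) := by
    intro m
    induction m with
    | zero => exact lt_of_lt_of_le hεpos (hHlb x₀)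
    | succ m ih =>
      rw [hseqsucc m, dif_pos ih]
      exact Classical.choose_spec (step m (seq m) ih)
  have hstab : ∀ m n, m ≤ n → ∀ i ∈ K m, seq n i = seq m i := by
    intro m n hmn
    induction n, hmn using Nat.le_induction with
    | base => exact fun i _ => rfl
    | succ n hn ih =>
      intro i hi
      have hin : i ∈ K n := hKmono hn hi
      have hni : i ∉ K (n + 1) \ K n := by
        simp [Finset.mem_sdiff, hin]
      have hstep : seq (n + 1) i = seq n i := by
        rw [hseqsucc n]
        split
        · simp [updateFinset, Finset.mem_sdiff, hin]
        · rfl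
      rw [hstep, ih i hi]
  set ξ : Π i, X i := fun i => if hex : ∃ m, i ∈ K m then seq (Nat.find hex) i else x₀ i with hξdef
  have hξ : ∀ m, ∀ i ∈ K m, ξ i = seq m i := by
    intro m i hi
    have hex : ∃ m', i ∈ K m' := ⟨m, hi⟩
    have h1 : Nat.find hex ≤ m := Nat.find_min' hex hi
    show (if hex : ∃ m, i ∈ K m then seq (Nat.find hex) i else x₀ i) = seq m i
    rw [dif_pos hex]
    exact (hstab (Nat.find hex) m h1 i (Nat.find_spec hex)).symm
  have hmem : ∀ n, ξ ∈ w n := by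
    intro n
    have h2 : H (n + 1) (seq (n + 1)) ≤ h (n + 1) n (seq (n + 1)) :=
      (hHle (n + 1) (seq (n + 1)) 0).trans (hantiN (by omega) (by omega) _)
    have h3 : h (n + 1) n = f n := by
      rw [hh]
      simp only
      rw [Finset.sdiff_self, lmarginal_empty]
    have h1 : 0 < f n (seq (n + 1)) := by
      calc (0 : ℝ≥0∞) < H (n + 1) (seq (n + 1)) := hpos (n + 1)
        _ ≤ h (n + 1) n (seq (n + 1)) := h2
        _ = f n (seq (n + 1)) := by rw [h3]
    have h5 : f n ξ = f n (seq (n + 1)) := hdep n _ _ (fun i hi => hξ (n + 1) i (hIK n hi))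
    by_contra hns
    have h6 : f n ξ = 0 := by simp [hf, Set.indicator_of_notMem hns]
    rw [h5] at h6
    rw [h6] at h1
    exact lt_irrefl _ h1
  have hcontra : ξ ∈ ⋂ n, w n := Set.mem_iInter.mpr hmem
  rw [hempty] at hcontra
  exact hcontra

lemma biUnion_range_mem (t : ℕ → Set (Π i, X i)) (ht : ∀ n, t n ∈ measurableCylinders X)
    (k : ℕ) : (⋃ m ∈ Finset.range k, t m) ∈ measurableCylinders X := by
  induction k with
  | zero => simpa using empty_mem_measurableCylinders X
  | succ k ih =>
    rw [Finset.range_add_one]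
    rw [Finset.set_biUnion_insert]
    exact union_mem_measurableCylinders (ht k) ih

include μ in
lemma cCon_biUnion_le (t : ℕ → Set (Π i, X i)) (ht : ∀ n, t n ∈ measurableCylinders X)
    (k : ℕ) : cCon μ (⋃ m ∈ Finset.range k, t m) ≤ ∑ m ∈ Finset.range k, cCon μ (t m) := by
  induction k with
  | zero => simp [cCon_empty μ]
  | succ k ih =>
    rw [Finset.range_add_one, Finset.set_biUnion_insert, Finset.sum_insert (by simp)]
    exact (cCon_union_le μ (ht k) (biUnion_range_mem t ht k)).trans (add_le_add le_rfl ih)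

include μ in
lemma cCon_le_tsum {v : Set (Π i, X i)} (hv : v ∈ measurableCylinders X)
    (t : ℕ → Set (Π i, X i)) (ht : ∀ n, t n ∈ measurableCylinders X)
    (hsub : v ⊆ ⋃ n, t n) : cCon μ v ≤ ∑' n, cCon μ (t n) := by
  set u : ℕ → Set (Π i, X i) := fun k => ⋃ m ∈ Finset.range k, t m with hu
  have humem : ∀ k, u k ∈ measurableCylinders X := biUnion_range_mem t ht
  set wseq : ℕ → Set (Π i, X i) := fun n => v \ u (n + 1) with hwseq
  have hwmem : ∀ n, wseq n ∈ measurableCylinders X := fun n =>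
    diff_mem_measurableCylinders hv (humem (n + 1))
  have hwanti : Antitone wseq := by
    intro a b hab
    refine Set.diff_subset_diff_right ?_
    exact Set.biUnion_subset_biUnion_left (Finset.range_subset_range.mpr (by omega))
  have hwempty : ⋂ n, wseq n = ∅ := by
    ext z
    simp only [Set.mem_iInter, Set.mem_empty_iff_false, iff_false, not_forall]
    by_cases hzv : z ∈ v
    · obtain ⟨n, hn⟩ := Set.mem_iUnion.mp (hsub hzv)
      refine ⟨n, fun hmem => hmem.2 ?_⟩
      exact Set.mem_biUnion (Finset.self_mem_range_succ n) hn
    · exact ⟨0, fun hmem => hzv hmem.1⟩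
  have htend := tendsto_cCon_zero μ wseq hwmem hwanti hwempty
  have hbound : ∀ n, cCon μ v ≤ cCon μ (wseq n) + ∑' m, cCon μ (t m) := by
    intro n
    have hsub2 : v ⊆ wseq n ∪ u (n + 1) := by
      intro z hz
      by_cases hzu : z ∈ u (n + 1)
      · exact Or.inr hzu
      · exact Or.inl ⟨hz, hzu⟩
    calc cCon μ v ≤ cCon μ (wseq n ∪ u (n + 1)) :=
          cCon_mono μ hv (union_mem_measurableCylinders (hwmem n) (humem (n + 1))) hsub2
      _ ≤ cCon μ (wseq n) + cCon μ (u (n + 1)) := cCon_union_le μ (hwmem n) (humem (n + 1))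
      _ ≤ cCon μ (wseq n) + ∑ m ∈ Finset.range (n + 1), cCon μ (t m) :=
          add_le_add le_rfl (cCon_biUnion_le μ t ht (n + 1))
      _ ≤ cCon μ (wseq n) + ∑' m, cCon μ (t m) :=
          add_le_add le_rfl (ENNReal.sum_le_tsum _)
  have hlim : Filter.Tendsto (fun n => cCon μ (wseq n) + ∑' m, cCon μ (t m)) Filter.atTop
      (𝓝 (0 + ∑' m, cCon μ (t m))) := htend.add tendsto_const_nhds
  have hfin := ge_of_tendsto' hlim hbound
  rwa [zero_add] at hfin

open scoped Classical in
/-- Extension of the cylinder content to all sets (junk value `⊤` off the cylinders). -/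
noncomputable def mOut : Set (Π i, X i) → ℝ≥0∞ :=
  fun v => if v ∈ measurableCylinders X then cCon μ v else ⊤

include μ in
lemma mOut_empty : mOut μ (∅ : Set (Π i, X i)) = 0 := by
  rw [mOut, if_pos (empty_mem_measurableCylinders X), cCon_empty μ]

/-- The outer measure induced by the cylinder content. -/
noncomputable def OM : OuterMeasure (Π i, X i) :=
  OuterMeasure.ofFunction (mOut μ) (mOut_empty μ)

include μ in
lemma OM_cyl {v : Set (Π i, X i)} (hv : v ∈ measurableCylinders X) : OM μ v = cCon μ v := by
  refine le_antisymm ((OuterMeasure.ofFunction_le v).trans_eq (by rw [mOut, if_pos hv])) ?_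
  rw [OM, OuterMeasure.ofFunction_apply]
  refine le_iInf fun t => le_iInf fun hsub => ?_
  by_cases hall : ∀ n, t n ∈ measurableCylinders X
  · calc cCon μ v ≤ ∑' n, cCon μ (t n) := cCon_le_tsum μ hv t hall hsub
      _ = ∑' n, mOut μ (t n) := tsum_congr fun n => by rw [mOut, if_pos (hall n)]
  · push_neg at hall
    obtain ⟨n0, hn0⟩ := hall
    have htop : mOut μ (t n0) = ⊤ := by rw [mOut, if_neg hn0]
    calc cCon μ v ≤ ⊤ := le_top
      _ = mOut μ (t n0) := htop.symm
      _ ≤ ∑' n, mOut μ (t n) := ENNReal.le_tsum n0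

include μ in
lemma pi_le_caratheodory : MeasurableSpace.pi ≤ (OM μ).caratheodory := by
  rw [← generateFrom_measurableCylinders]
  refine MeasurableSpace.generateFrom_le fun s hs => ?_
  refine OuterMeasure.ofFunction_caratheodory fun t => ?_
  by_cases ht : t ∈ measurableCylinders X
  · have h1 : t ∩ s ∈ measurableCylinders X := inter_mem_measurableCylinders ht hs
    have h2 : t \ s ∈ measurableCylinders X := diff_mem_measurableCylinders ht hs
    have hd : Disjoint (t ∩ s) (t \ s) :=
      Set.disjoint_sdiff_right.mono_left Set.inter_subset_right
    have e1 : mOut μ t = cCon μ t := by rw [mOut, if_pos ht]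
    have e2 : mOut μ (t ∩ s) = cCon μ (t ∩ s) := by rw [mOut, if_pos h1]
    have e3 : mOut μ (t \ s) = cCon μ (t \ s) := by rw [mOut, if_pos h2]
    rw [e1, e2, e3, ← cCon_union_of_disjoint μ h1 h2 hd, Set.inter_union_diff]
  · have e1 : mOut μ t = ⊤ := by rw [mOut, if_neg ht]
    rw [e1]
    exact le_top

include μ in
lemma exists_productMeasure : ∃ ν : Measure (Π i, X i), IsProbabilityMeasure ν ∧
    ∀ I : Finset ι, ν.map I.restrict = Measure.pi (fun i : I ↦ μ i) := by
  set ν : Measure (Π i, X i) := (OM μ).toMeasure (pi_le_caratheodory μ) with hν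
  have hνcyl : ∀ {J : Finset ι} {S : Set (Π i : J, X i)}, MeasurableSet S →
      ν (cylinder J S) = Measure.pi (fun i : J ↦ μ i) S := by
    intro J S hS
    rw [hν, toMeasure_apply _ _ (hS.cylinder _),
      OM_cyl μ (cylinder_mem_measurableCylinders _ _ hS), cCon_eq μ hS]
  refine ⟨ν, ?_, ?_⟩
  · constructor
    have h1 := hνcyl (J := (∅ : Finset ι)) (S := Set.univ) MeasurableSet.univ
    rw [cylinder_univ] at h1
    rw [h1, measure_univ]
  · intro J
    refine Measure.ext fun S hS => ?_
    rw [Measure.map_apply (J.measurable_restrict) hS]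
    exact hνcyl hS

end ExistsUniqueProductMeasureAux

/-- Existence and uniqueness of the product of an arbitrary family of probability measures:
there is a unique probability measure on `Π i, X i` whose pushforward under each restriction
map to a finite set of coordinates `I` is the finite product measure `⊗_{i ∈ I} μ i`. -/
theorem exists_unique_productMeasure {ι : Type*} {X : ι → Type*} [∀ i, MeasurableSpace (X i)]
    (μ : ∀ i, Measure (X i)) [∀ i, IsProbabilityMeasure (μ i)] :
    ∃! ν : Measure (Π i, X i), IsProbabilityMeasure ν ∧
      ∀ I : Finset ι, ν.map I.restrict = Measure.pi (fun i : I ↦ μ i) := by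
  classical
  obtain ⟨ν, hprob, hmap⟩ := ExistsUniqueProductMeasureAux.exists_productMeasure μ
  refine ⟨ν, ⟨hprob, hmap⟩, ?_⟩
  rintro ν' ⟨hprob', hmap'⟩
  have h1 : IsProjectiveLimit ν' (fun I : Finset ι => Measure.pi (fun i : I ↦ μ i)) :=
    fun I => hmap' I
  have h2 : IsProjectiveLimit ν (fun I : Finset ι => Measure.pi (fun i : I ↦ μ i)) :=
    fun I => hmap I
  exact h1.unique h2
end

section
/- Let (X_n, A_n, μ_n)_{n∈ℕ} be a family of probability spaces and consider the constant Markov kernels κ_n := const(μ_{n+1}) from ∏_{i≤n} X_i to X_{n+1}. Then for all a, b ∈ ℕ, the partial-trajectory kernel η_{a,b} built from these constant kernels equals the pushforward under the canonical map (∏_{i≤a} X_i) × (∏_{a<i≤b} X_i) → ∏_{i≤b} X_i of the product of the identity kernel on ∏_{i≤a} X_i with the constant kernel equal to the product measure ⊗_{a<i≤b} μ_i. -/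
open MeasureTheory hiding partialTraj_const
open ProbabilityTheory Preorder Filter
open scoped ENNReal ProbabilityTheory Topology

variable {X : ℕ → Type*} [∀ n, MeasurableSpace (X n)]

/-- Canonical map gluing a trajectory up to time `b` with a point of `X (b + 1)` into a
trajectory up to time `b + 1`. -/
def IicProdSucc (b : ℕ) (p : (Π i : Finset.Iic b, X i) × X (b + 1)) :
    Π i : Finset.Iic (b + 1), X i :=
  fun i ↦ if h : i.1 ≤ b then p.1 ⟨i.1, Finset.mem_Iic.2 h⟩
    else cast (congrArg X (Nat.le_antisymm (Finset.mem_Iic.1 i.2)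
      (Nat.lt_of_not_le h))).symm p.2

/-- The partial trajectory kernel `η_{a,b}` built from the kernels `κ n`: for `b ≤ a` it is the
deterministic kernel given by the restriction map, and `η_{a,b+1}` is obtained from `η_{a,b}` by
composing with the product of the identity kernel and `κ b`. -/
noncomputable def partialTraj (κ : ∀ n, Kernel (Π i : Finset.Iic n, X i) (X (n + 1))) (a : ℕ) :
    (b : ℕ) → Kernel (Π i : Finset.Iic a, X i) (Π i : Finset.Iic b, X i)
  | 0 => Kernel.deterministic (frestrictLe₂ (Nat.zero_le a)) (measurable_frestrictLe₂ _)
  | b + 1 =>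
    if h : b + 1 ≤ a then Kernel.deterministic (frestrictLe₂ h) (measurable_frestrictLe₂ h)
    else ((Kernel.id ×ₖ κ b) ∘ₖ partialTraj κ a b).map (IicProdSucc b)

/-- Canonical map gluing a trajectory on the coordinates in `[0, a]` with one on the
coordinates in `(a, b]` to get a trajectory on the coordinates in `[0, b]`. -/
def IicProdIoc' (a b : ℕ)
    (p : (Π i : Finset.Iic a, X i) × (Π i : Finset.Ioc a b, X i)) :
    Π i : Finset.Iic b, X i :=
  fun i ↦ if h : i.1 ≤ a then p.1 ⟨i.1, Finset.mem_Iic.2 h⟩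
    else p.2 ⟨i.1, Finset.mem_Ioc.2 ⟨Nat.lt_of_not_le h, Finset.mem_Iic.1 i.2⟩⟩

/-- Gluing a point of `∏ i : Ioc a b, X i` with a point of `X (b+1)`. -/
def IocSnoc (a b : ℕ) (p : (Π i : Finset.Ioc a b, X i) × X (b + 1)) :
    Π i : Finset.Ioc a (b + 1), X i :=
  fun i ↦ if h : i.1 ≤ b then p.1 ⟨i.1, Finset.mem_Ioc.2 ⟨(Finset.mem_Ioc.1 i.2).1, h⟩⟩
    else cast (congrArg X (Nat.le_antisymm (Finset.mem_Ioc.1 i.2).2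
      (Nat.lt_of_not_le h))).symm p.2

lemma measurable_IicProdSucc (b : ℕ) : Measurable (IicProdSucc (X := X) b) := by
  refine measurable_pi_lambda _ (fun i ↦ ?_)
  by_cases h : i.1 ≤ b
  · simp only [IicProdSucc, dif_pos h]
    exact (measurable_pi_apply _).comp measurable_fst
  · simp only [IicProdSucc, dif_neg h]
    have hi : i.1 = b + 1 := Nat.le_antisymm (Finset.mem_Iic.1 i.2) (Nat.lt_of_not_le h)
    obtain ⟨i, hmem⟩ := i
    subst hi
    exact measurable_snd

lemma measurable_IicProdIoc' (a b : ℕ) : Measurable (IicProdIoc' (X := X) a b) := by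
  refine measurable_pi_lambda _ (fun i ↦ ?_)
  by_cases h : i.1 ≤ a
  · simp only [IicProdIoc', dif_pos h]
    exact (measurable_pi_apply _).comp measurable_fst
  · simp only [IicProdIoc', dif_neg h]
    exact (measurable_pi_apply _).comp measurable_snd

lemma measurable_IocSnoc (a b : ℕ) : Measurable (IocSnoc (X := X) a b) := by
  refine measurable_pi_lambda _ (fun i ↦ ?_)
  by_cases h : i.1 ≤ b
  · simp only [IocSnoc, dif_pos h]
    exact (measurable_pi_apply _).comp measurable_fst
  · simp only [IocSnoc, dif_neg h]
    have hi : i.1 = b + 1 := Nat.le_antisymm (Finset.mem_Ioc.1 i.2).2 (Nat.lt_of_not_le h)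
    obtain ⟨i, hmem⟩ := i
    subst hi
    exact measurable_snd

/-- For `b ≤ a`, the right-hand side kernel is the deterministic restriction kernel. -/
lemma rhs_of_le (μ : ∀ n, Measure (X n)) [∀ n, IsProbabilityMeasure (μ n)]
    {a b : ℕ} (hba : b ≤ a) :
    (Kernel.id ×ₖ Kernel.const (Π i : Finset.Iic a, X i)
        (Measure.pi (fun i : Finset.Ioc a b ↦ μ i))).map (IicProdIoc' a b) =
      Kernel.deterministic (frestrictLe₂ hba) (measurable_frestrictLe₂ hba) := by
  haveI : IsEmpty ↥(Finset.Ioc a b) :=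
    ⟨fun i ↦ by have := Finset.mem_Ioc.1 i.2; omega⟩
  refine Kernel.ext fun x ↦ ?_
  rw [Kernel.map_apply _ (measurable_IicProdIoc' a b), Kernel.prod_apply, Kernel.id_apply,
    Kernel.const_apply, Measure.pi_of_empty, Measure.dirac_prod_dirac,
    Measure.map_dirac' (measurable_IicProdIoc' a b), Kernel.deterministic_apply]
  congr 1
  funext i
  have h : i.1 ≤ a := le_trans (Finset.mem_Iic.1 i.2) hba
  simp only [IicProdIoc', dif_pos h]
  rfl

lemma map_IocSnoc (μ : ∀ n, Measure (X n)) [∀ n, IsProbabilityMeasure (μ n)]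
    {a b : ℕ} (hab : a ≤ b) :
    Measure.map (IocSnoc a b)
        ((Measure.pi fun i : Finset.Ioc a b ↦ μ i).prod (μ (b + 1))) =
      Measure.pi (fun i : Finset.Ioc a (b + 1) ↦ μ i) := by
  refine (Measure.pi_eq fun s hs ↦ ?_).symm
  rw [Measure.map_apply (measurable_IocSnoc a b) (MeasurableSet.univ_pi hs)]
  have hmemtop : b + 1 ∈ Finset.Ioc a (b + 1) :=
    Finset.mem_Ioc.2 ⟨Nat.lt_succ_of_le hab, le_rfl⟩
  have hmem : ∀ i : ↥(Finset.Ioc a b), i.1 ∈ Finset.Ioc a (b + 1) := fun i ↦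
    Finset.mem_Ioc.2 ⟨(Finset.mem_Ioc.1 i.2).1, (Finset.mem_Ioc.1 i.2).2.trans b.le_succ⟩
  have hpre : IocSnoc (X := X) a b ⁻¹' Set.pi Set.univ s =
      (Set.pi Set.univ fun i : Finset.Ioc a b ↦ s ⟨i.1, hmem i⟩) ×ˢ s ⟨b + 1, hmemtop⟩ := by
    ext p
    simp only [Set.mem_preimage, Set.mem_pi, Set.mem_univ, true_implies, Set.mem_prod]
    constructor
    · intro h
      refine ⟨fun i ↦ ?_, ?_⟩
      · have h' := h ⟨i.1, hmem i⟩
        simp only [IocSnoc] at h'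
        rw [dif_pos (Finset.mem_Ioc.1 i.2).2] at h'
        exact h'
      · have h' := h ⟨b + 1, hmemtop⟩
        simp only [IocSnoc] at h'
        rw [dif_neg (by omega : ¬ b + 1 ≤ b)] at h'
        exact h'
    · rintro ⟨h1, h2⟩ i
      simp only [IocSnoc]
      by_cases h : i.1 ≤ b
      · rw [dif_pos h]
        exact h1 ⟨i.1, Finset.mem_Ioc.2 ⟨(Finset.mem_Ioc.1 i.2).1, h⟩⟩
      · rw [dif_neg h]
        have hi : i.1 = b + 1 := Nat.le_antisymm (Finset.mem_Ioc.1 i.2).2 (Nat.lt_of_not_le h)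
        obtain ⟨i, hmem'⟩ := i
        subst hi
        exact h2
  rw [hpre, Measure.prod_prod, Measure.pi_pi]
  set F : ℕ → ℝ≥0∞ := fun n ↦ if h : n ∈ Finset.Ioc a (b + 1) then μ n (s ⟨n, h⟩) else 1
    with hF
  have h1 : ∀ i : ↥(Finset.Ioc a b), μ i.1 (s ⟨i.1, hmem i⟩) = F i.1 := fun i ↦ by
    simp only [hF]; rw [dif_pos (hmem i)]
  have h2 : ∀ i : ↥(Finset.Ioc a (b + 1)), μ i.1 (s i) = F i.1 := fun i ↦ by
    simp only [hF]; rw [dif_pos i.2]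
  have htop : μ (b + 1) (s ⟨b + 1, hmemtop⟩) = F (b + 1) := by
    simp only [hF]; rw [dif_pos hmemtop]
  calc (∏ i : ↥(Finset.Ioc a b), μ i.1 (s ⟨i.1, hmem i⟩)) * μ (b + 1) (s ⟨b + 1, hmemtop⟩)
      = (∏ i : ↥(Finset.Ioc a b), F i.1) * F (b + 1) := by
        rw [Finset.prod_congr rfl fun i _ ↦ h1 i, htop]
    _ = (∏ n ∈ Finset.Ioc a b, F n) * F (b + 1) := by rw [Finset.prod_coe_sort]
    _ = ∏ n ∈ Finset.Ioc a (b + 1), F n := (Finset.prod_Ioc_succ_top hab F).symm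
    _ = ∏ i : ↥(Finset.Ioc a (b + 1)), F i.1 := (Finset.prod_coe_sort _ _).symm
    _ = ∏ i : ↥(Finset.Ioc a (b + 1)), μ i.1 (s i) :=
        Finset.prod_congr rfl fun i _ ↦ (h2 i).symm

lemma key_glue {a b : ℕ} (hab : a ≤ b) (x : Π i : Finset.Iic a, X i)
    (p : (Π i : Finset.Ioc a b, X i) × X (b + 1)) :
    IicProdSucc b (IicProdIoc' a b (x, p.1), p.2) = IicProdIoc' a (b + 1) (x, IocSnoc a b p) := by
  funext i
  by_cases h2 : i.1 ≤ b
  · by_cases h1 : i.1 ≤ a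
    · simp only [IicProdSucc, IicProdIoc', IocSnoc, dif_pos h1, dif_pos h2]
    · simp only [IicProdSucc, IicProdIoc', IocSnoc, dif_pos h2, dif_neg h1]
  · have h1 : ¬ i.1 ≤ a := by omega
    simp only [IicProdSucc, IicProdIoc', IocSnoc, dif_neg h1, dif_neg h2]

lemma id_prod_const_comp {α β γ : Type*} [MeasurableSpace α] [MeasurableSpace β]
    [MeasurableSpace γ] (κ : Kernel α β) [IsSFiniteKernel κ] (ν : Measure γ) [SFinite ν] :
    (Kernel.id ×ₖ Kernel.const β ν) ∘ₖ κ = κ ×ₖ Kernel.const α ν := by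
  rw [Kernel.prod_const_comp, Kernel.id_comp]

/-- The partial trajectory kernel associated with the constant kernels `κ_n = const (μ (n+1))`
is the pushforward, under the canonical gluing map, of the product of the identity kernel
with the constant kernel given by the product measure `⊗_{a < i ≤ b} μ i`. -/
theorem partialTraj_const (μ : ∀ n, Measure (X n)) [∀ n, IsProbabilityMeasure (μ n)]
    (a b : ℕ) :
    partialTraj (fun n ↦ Kernel.const (Π i : Finset.Iic n, X i) (μ (n + 1))) a b =
      (Kernel.id ×ₖ Kernel.const (Π i : Finset.Iic a, X i)
          (Measure.pi (fun i : Finset.Ioc a b ↦ μ i))).map (IicProdIoc' a b) := by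
  induction b with
  | zero => rw [partialTraj, rhs_of_le μ (Nat.zero_le a)]
  | succ b ih =>
    rw [partialTraj]
    by_cases hba : b + 1 ≤ a
    · rw [dif_pos hba, rhs_of_le μ hba]
    · rw [dif_neg hba, ih]
      have hab : a ≤ b := by omega
      rw [id_prod_const_comp]
      refine Kernel.ext fun x ↦ ?_
      have hKx : ((Kernel.id ×ₖ Kernel.const (Π i : Finset.Iic a, X i)
            (Measure.pi (fun i : Finset.Ioc a b ↦ μ i))).map (IicProdIoc' a b)) x =
          Measure.map (fun y ↦ IicProdIoc' a b (x, y))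
            (Measure.pi (fun i : Finset.Ioc a b ↦ μ i)) := by
        rw [Kernel.map_apply _ (measurable_IicProdIoc' a b), Kernel.prod_apply, Kernel.id_apply,
          Kernel.const_apply, Measure.dirac_prod,
          Measure.map_map (measurable_IicProdIoc' a b) measurable_prodMk_left]
        rfl
      rw [Kernel.map_apply _ (measurable_IicProdSucc b), Kernel.prod_apply, Kernel.const_apply,
        hKx, Kernel.map_apply _ (measurable_IicProdIoc' a (b + 1)), Kernel.prod_apply,
        Kernel.id_apply, Kernel.const_apply, Measure.dirac_prod, ← map_IocSnoc μ hab]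
      have hmm : (Measure.map (fun y ↦ IicProdIoc' a b (x, y))
            (Measure.pi (fun i : Finset.Ioc a b ↦ μ i))).prod (μ (b + 1)) =
          Measure.map (Prod.map (fun y ↦ IicProdIoc' a b (x, y)) id)
            ((Measure.pi (fun i : Finset.Ioc a b ↦ μ i)).prod (μ (b + 1))) := by
        conv_lhs => rw [← Measure.map_id (μ := μ (b + 1))]
        exact Measure.map_prod_map _ _
          ((measurable_IicProdIoc' a b).comp measurable_prodMk_left) measurable_id
      have hg1 : Measurable (Prod.map (fun y ↦ IicProdIoc' (X := X) a b (x, y))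
          (id : X (b + 1) → X (b + 1))) :=
        by exact ((measurable_IicProdIoc' a b).comp measurable_prodMk_left).prodMap measurable_id
      rw [hmm, Measure.map_map (measurable_IicProdSucc b) hg1,
        Measure.map_map measurable_prodMk_left (measurable_IocSnoc a b),
        Measure.map_map (measurable_IicProdIoc' a (b + 1))
          (measurable_prodMk_left.comp (measurable_IocSnoc a b))]
      have hfun : (IicProdSucc b ∘ Prod.map (fun y ↦ IicProdIoc' (X := X) a b (x, y)) id) =
          (IicProdIoc' (X := X) a (b + 1) ∘ (Prod.mk x ∘ IocSnoc a b)) :=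
        funext fun p ↦ key_glue hab x p
      rw [hfun]
end

section
/- Let (X_i, A_i, μ_i)_{i∈ι} be a family of probability spaces, and for each finite I ⊆ ι let μ_I := ⊗_{i∈I} μ_i be the finite product measure. If (A_n)_{n∈ℕ} is a non-increasing sequence of measurable cylinders of ∏_{i∈ι} X_i with empty intersection, then the content P(A_n) → 0 as n → ∞, where P(π_I^{-1}(A)) := (⊗_{i∈I} μ_i)(A) for any finite I and measurable A ⊆ ∏_{i∈I} X_i. Consequently P is σ-sub-additive on measurable cylinders. -/
open MeasureTheory ProbabilityTheory Preorder Filter Set Function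
open scoped ENNReal ProbabilityTheory Topology

namespace ProdContentAux

variable {ι : Type*} {X : ι → Type*} [∀ i, MeasurableSpace (X i)] [DecidableEq ι]
  (μ : ∀ i, Measure (X i)) [∀ i, IsProbabilityMeasure (μ i)]

lemma lmarginal_of_disjoint {f : (Π i, X i) → ℝ≥0∞} {I s : Finset ι}
    (hdep : ∀ x y : Π i, X i, (∀ i ∈ I, x i = y i) → f x = f y)
    (hs : Disjoint s I) : ∫⋯∫⁻_s, f ∂μ = f := by
  ext x
  have h : ∀ y : Π i : s, X i, f (updateFinset x s y) = f x := by
    intro y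
    refine hdep _ _ fun i hi => ?_
    rw [updateFinset, dif_neg fun h => Finset.disjoint_left.mp hs h hi]
  simp_rw [lmarginal, h]
  simp

lemma lmarginal_eq_of_subset'' {f : (Π i, X i) → ℝ≥0∞} (hf : Measurable f) {I s t : Finset ι}
    (hst : s ⊆ t)
    (hdep : ∀ x y : Π i, X i, (∀ i ∈ I, x i = y i) → f x = f y)
    (h : Disjoint (t \ s) I) : ∫⋯∫⁻_t, f ∂μ = ∫⋯∫⁻_s, f ∂μ := by
  rw [← Finset.union_sdiff_of_subset hst, lmarginal_union μ f hf Finset.disjoint_sdiff,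
    lmarginal_of_disjoint μ hdep h]

lemma lmarginal_le_one {f : (Π i, X i) → ℝ≥0∞} (hf : f ≤ 1) (s : Finset ι) (x : Π i, X i) :
    (∫⋯∫⁻_s, f ∂μ) x ≤ 1 := by
  refine le_trans (lintegral_mono fun y => hf _) ?_
  simp

lemma lmarginal_indicator_cylinder (I : Finset ι) {S : Set (Π i : I, X i)}
    (hS : MeasurableSet S) (x : Π i, X i) :
    (∫⋯∫⁻_I, (cylinder I S).indicator 1 ∂μ) x = Measure.pi (fun i : I => μ i) S := by
  rw [lmarginal]
  have h : ∀ y : Π i : I, X i,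
      (cylinder I S).indicator (1 : (Π i, X i) → ℝ≥0∞) (updateFinset x I y) = S.indicator 1 y := by
    intro y
    have hr : I.restrict (updateFinset x I y) = y := by
      funext i
      simp [Finset.restrict, updateFinset, i.2]
    have hmem : updateFinset x I y ∈ cylinder I S ↔ y ∈ S := by
      rw [mem_cylinder, hr]
    by_cases hy : y ∈ S
    · simp [Set.indicator_of_mem (hmem.mpr hy), Set.indicator_of_mem hy]
    · simp [Set.indicator_of_notMem (fun h => hy (hmem.mp h)), Set.indicator_of_notMem hy]
  simp_rw [h]
  rw [lintegral_indicator_one hS]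

lemma isSetRing_measurableCylinders : IsSetRing (measurableCylinders X) :=
  ⟨empty_mem_measurableCylinders X, fun _ _ hs ht => union_mem_measurableCylinders hs ht,
    fun _ _ hs ht => diff_mem_measurableCylinders hs ht⟩

lemma tendsto_zero (m : AddContent ℝ≥0∞ (measurableCylinders X))
    (hm : ∀ (I : Finset ι) (A : Set (∀ i : I, X i)), MeasurableSet A →
      m (cylinder I A) = Measure.pi (fun i : I ↦ μ i) A)
    (A : ℕ → Set (Π i, X i)) (hA : ∀ n, A n ∈ measurableCylinders X) (hanti : Antitone A)
    (hempty : (⋂ n, A n) = ∅) : Tendsto (fun n ↦ m (A n)) atTop (𝓝 0) := by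
  classical
  -- each `X i` is nonempty
  have hXne : ∀ i, Nonempty (X i) := by
    intro i
    by_contra h
    rw [not_nonempty_iff] at h
    have h1 := measure_univ (μ := μ i)
    rw [(μ i).eq_zero_of_isEmpty] at h1
    simp at h1
  have hPine : Nonempty (Π i, X i) := ⟨fun i => (hXne i).some⟩
  -- cylinder representations
  obtain ⟨I, S, hS, hAeq⟩ : ∃ (I : ℕ → Finset ι) (S : ∀ n, Set (Π i : (I n : Finset ι), X i)),
      (∀ n, MeasurableSet (S n)) ∧ ∀ n, A n = cylinder (I n) (S n) := by
    choose I S hS hAeq using fun n => (mem_measurableCylinders _).mp (hA n)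
    exact ⟨I, S, hS, hAeq⟩
  set f : ℕ → (Π i, X i) → ℝ≥0∞ := fun n => (A n).indicator 1 with hf_def
  have hf_meas : ∀ n, Measurable (f n) := fun n =>
    measurable_one.indicator (MeasurableSet.of_mem_measurableCylinders (hA n))
  have hf_anti : Antitone f := fun a b hab =>
    Set.indicator_le_indicator_of_subset (hanti hab) (fun x => zero_le)
  have hf_le_one : ∀ n, f n ≤ 1 := by
    intro n x
    by_cases hx : x ∈ A n <;> simp [f, hx]
  have hdep : ∀ n (x y : Π i, X i), (∀ i ∈ I n, x i = y i) → f n x = f n y := by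
    intro n x y h
    have hiff : x ∈ A n ↔ y ∈ A n := by
      rw [hAeq n, mem_cylinder, mem_cylinder]
      have : (I n).restrict x = (I n).restrict y := funext fun i => h i i.2
      rw [this]
    by_cases hx : x ∈ A n
    · simp [f, Set.indicator_of_mem hx, Set.indicator_of_mem (hiff.mp hx)]
    · simp [f, Set.indicator_of_notMem hx,
        Set.indicator_of_notMem (fun hy => hx (hiff.mpr hy))]
  have hval : ∀ n (x : Π i, X i), (∫⋯∫⁻_(I n), f n ∂μ) x = m (A n) := by
    intro n x
    rw [hf_def]
    simp only [hAeq n]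
    rw [lmarginal_indicator_cylinder μ (I n) (hS n) x, hm (I n) (S n) (hS n)]
  have hb : ∀ n, m (A n) ≤ 1 := by
    intro n
    rw [hAeq n, hm _ _ (hS n)]
    exact prob_le_one
  have hmono : Antitone fun n => m (A n) := fun a b hab =>
    addContent_mono isSetRing_measurableCylinders.isSetSemiring (hA b) (hA a) (hanti hab)
  have htend : Tendsto (fun n ↦ m (A n)) atTop (𝓝 (⨅ n, m (A n))) := tendsto_atTop_iInf hmono
  suffices hε : (⨅ n, m (A n)) = 0 by rwa [hε] at htend
  by_contra hε0
  set ε := ⨅ n, m (A n) with hε_def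
  have hε1 : ε ≤ 1 := le_trans (iInf_le _ 0) (hb 0)
  have hεtop : ε ≠ ∞ := fun h => by simp [h] at hε1
  have hεle : ∀ n, ε ≤ m (A n) := fun n => iInf_le _ n
  -- the sequences of finsets
  set δ : ℕ → ℝ≥0∞ := fun k => ε * 2⁻¹ ^ k with hδ_def
  have hδ0 : ∀ k, δ k ≠ 0 := fun k => mul_ne_zero hε0 (pow_ne_zero _ (by simp))
  have hδtop : ∀ k, δ k ≠ ∞ := fun k =>
    ENNReal.mul_ne_top hεtop (ENNReal.pow_ne_top (by simp))
  have hδsucc : ∀ k, δ (k + 1) = δ k / 2 := by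
    intro k
    rw [hδ_def]
    simp only []
    rw [pow_succ, ← mul_assoc, div_eq_mul_inv]
  set L : ℕ → Finset ι := fun n => (Finset.range (n + 1)).biUnion I with hL_def
  have hIL : ∀ n, I n ⊆ L n := fun n =>
    Finset.subset_biUnion_of_mem I (Finset.self_mem_range_succ n)
  have hLmono : Monotone L := fun a b hab =>
    Finset.biUnion_subset_biUnion_of_subset_left I (Finset.range_subset_range.mpr (by omega))
  have hdepL : ∀ n (x y : Π i, X i), (∀ i ∈ L n, x i = y i) → f n x = f n y :=
    fun n x y h => hdep n x y fun i hi => h i (hIL n hi)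
  set J : ℕ → Finset ι := fun k => Nat.casesOn k ∅ L with hJ_def
  have hJmono : Monotone J := by
    refine monotone_nat_of_le_succ fun k => ?_
    cases k with
    | zero => exact Finset.empty_subset _
    | succ k => exact hLmono (Nat.le_succ k)
  have hJsucc : ∀ n, J (n + 1) = L n := fun n => rfl
  -- the inductive step
  have key : ∀ (k : ℕ) (z : Π i, X i), (∀ n, δ k ≤ (∫⋯∫⁻_(L n \ J k), f n ∂μ) z) →
      ∃ z' : Π i, X i, (∀ n, δ (k + 1) ≤ (∫⋯∫⁻_(L n \ J (k + 1)), f n ∂μ) z') ∧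
        ∀ i ∈ J k, z' i = z i := by
    intro k z hz
    set D := J (k + 1) \ J k with hD_def
    set R : ℕ → Finset ι := fun n => L n \ J (k + 1) with hR_def
    set g : ℕ → (Π i : D, X i) → ℝ≥0∞ :=
      fun n y => (∫⋯∫⁻_(R n), f n ∂μ) (updateFinset z D y) with hg_def
    have hRmono : ∀ n, R n ⊆ R (n + 1) :=
      fun n => Finset.sdiff_subset_sdiff (hLmono (Nat.le_succ n)) le_rfl
    have hg_meas : ∀ n, Measurable (g n) := fun n =>
      ((hf_meas n).lmarginal μ).comp measurable_updateFinset
    have hg_int : ∀ n, δ k ≤ ∫⁻ y, g n y ∂(Measure.pi fun i : D => μ i) := by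
      intro n
      have h2 : (L n ∪ J (k + 1)) \ J k = D ∪ R n := by
        ext i
        simp only [Finset.mem_sdiff, Finset.mem_union, hD_def, hR_def]
        have := @hJmono k (k + 1) (Nat.le_succ k)
        constructor
        · rintro ⟨h1 | h1, h2⟩
          · by_cases h3 : i ∈ J (k + 1)
            · exact Or.inl ⟨h3, h2⟩
            · exact Or.inr ⟨h1, h3⟩
          · exact Or.inl ⟨h1, h2⟩
        · rintro (⟨h1, h2⟩ | ⟨h1, h2⟩)
          · exact ⟨Or.inr h1, h2⟩
          · exact ⟨Or.inl h1, fun hk => h2 (this hk)⟩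
      have h1 : (∫⋯∫⁻_(L n \ J k), f n ∂μ) z = (∫⋯∫⁻_(D ∪ R n), f n ∂μ) z := by
        rw [← h2]
        refine (congrFun (lmarginal_eq_of_subset'' μ (hf_meas n) ?_ (hdepL n) ?_) z).symm
        · exact Finset.sdiff_subset_sdiff Finset.subset_union_left le_rfl
        · refine Finset.disjoint_left.mpr fun i hi hiL => ?_
          simp only [Finset.mem_sdiff, Finset.mem_union] at hi
          exact hi.2 ⟨hiL, hi.1.2⟩
      have h3 : Disjoint D (R n) := by
        refine Finset.disjoint_left.mpr fun i hi hi' => ?_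
        simp only [hD_def, Finset.mem_sdiff] at hi
        simp only [hR_def, Finset.mem_sdiff] at hi'
        exact hi'.2 hi.1
      have h4 : (∫⋯∫⁻_(D ∪ R n), f n ∂μ) z = ∫⁻ y, g n y ∂(Measure.pi fun i : D => μ i) := by
        rw [lmarginal_union μ (f n) (hf_meas n) h3]
        rfl
      rw [← h4, ← h1]
      exact hz n
    have hg_anti : Antitone g := by
      refine antitone_nat_of_succ_le fun n y => ?_
      calc g (n + 1) y ≤ (∫⋯∫⁻_(R (n + 1)), f n ∂μ) (updateFinset z D y) :=
            lmarginal_mono (hf_anti (Nat.le_succ n)) _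
        _ = g n y := by
            refine congrFun (lmarginal_eq_of_subset'' μ (hf_meas n) (hRmono n) (hdepL n) ?_) _
            refine Finset.disjoint_left.mpr fun i hi hiL => ?_
            simp only [hR_def, Finset.mem_sdiff] at hi
            exact hi.2 ⟨hiL, hi.1.2⟩
    have hg_fin : ∫⁻ y, g 0 y ∂(Measure.pi fun i : D => μ i) ≠ ∞ := by
      refine ne_top_of_le_ne_top (by simp : (1 : ℝ≥0∞) ≠ ∞) ?_
      refine le_trans (lintegral_mono fun y => lmarginal_le_one μ (hf_le_one 0) _ _) ?_
      simp
    have hiInf : δ k ≤ ∫⁻ y, ⨅ n, g n y ∂(Measure.pi fun i : D => μ i) := by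
      rw [lintegral_iInf hg_meas hg_anti hg_fin]
      exact le_iInf hg_int
    have hex : ∃ y, δ (k + 1) ≤ ⨅ n, g n y := by
      by_contra h
      push_neg at h
      have hle : ∫⁻ y, ⨅ n, g n y ∂(Measure.pi fun i : D => μ i) ≤ δ (k + 1) := by
        refine le_trans (lintegral_mono fun y => (h y).le) ?_
        simp
      have hlt : δ (k + 1) < δ k := by
        rw [hδsucc k]
        exact ENNReal.half_lt_self (hδ0 k) (hδtop k)
      exact absurd (hiInf.trans hle) hlt.not_ge
    obtain ⟨y, hy⟩ := hex
    refine ⟨updateFinset z D y, fun n => le_trans hy ((iInf_le _ n).trans_eq rfl), ?_⟩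
    intro i hi
    rw [updateFinset, dif_neg]
    simp only [hD_def, Finset.mem_sdiff]
    exact fun h => h.2 hi
  -- build the sequence of points
  obtain ⟨z0⟩ := hPine
  have base : ∀ n, δ 0 ≤ (∫⋯∫⁻_(L n \ J 0), f n ∂μ) z0 := by
    intro n
    have hJ0 : L n \ J 0 = L n := by simp [hJ_def]
    rw [hJ0]
    have heq : (∫⋯∫⁻_(L n), f n ∂μ) z0 = (∫⋯∫⁻_(I n), f n ∂μ) z0 :=
      congrFun (lmarginal_eq_of_subset'' μ (hf_meas n) (hIL n) (hdep n)
        Finset.sdiff_disjoint) z0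
    rw [heq, hval n z0]
    simpa [hδ_def] using hεle n
  choose! z' hz'1 hz'2 using key
  set zseq : ℕ → Π i, X i := fun k => Nat.rec z0 (fun k zk => z' k zk) k with hzseq_def
  have hzseq : ∀ k, ∀ n, δ k ≤ (∫⋯∫⁻_(L n \ J k), f n ∂μ) (zseq k) := by
    intro k
    induction k with
    | zero => exact base
    | succ k ih => exact hz'1 k (zseq k) ih
  have hzstep : ∀ k, ∀ i ∈ J k, zseq (k + 1) i = zseq k i := fun k => hz'2 k (zseq k) (hzseq k)
  have hagree : ∀ k k', k ≤ k' → ∀ i ∈ J k, zseq k' i = zseq k i := by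
    intro k k' hkk'
    induction k', hkk' using Nat.le_induction with
    | base => intro i _; rfl
    | succ k' hkk' ih =>
      intro i hi
      rw [hzstep k' i (hJmono hkk' hi), ih i hi]
  set zlim : Π i, X i := fun i => if h : ∃ k, i ∈ J k then zseq h.choose i else z0 i with hzlim_def
  have hlim : ∀ k, ∀ i ∈ J k, zlim i = zseq k i := by
    intro k i hi
    have h : ∃ k', i ∈ J k' := ⟨k, hi⟩
    simp only [hzlim_def, dif_pos h]
    have h1 := hagree h.choose (max h.choose k) (le_max_left _ _) i h.choose_spec
    have h2 := hagree k (max h.choose k) (le_max_right _ _) i hi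
    rw [← h1, h2]
  have hmem : ∀ n, zlim ∈ A n := by
    intro n
    have h1 := hzseq (n + 1) n
    have hLJ : L n \ J (n + 1) = ∅ := by rw [hJsucc n, Finset.sdiff_self]
    rw [hLJ, lmarginal_empty] at h1
    have hz_mem : zseq (n + 1) ∈ A n := by
      by_contra h
      rw [show f n (zseq (n + 1)) = 0 from Set.indicator_of_notMem h _] at h1
      exact hδ0 (n + 1) (le_antisymm h1 zero_le)
    have heq : f n zlim = f n (zseq (n + 1)) := by
      refine hdepL n _ _ fun i hi => ?_
      exact hlim (n + 1) i (by rwa [hJsucc n])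
    by_contra h
    rw [show f n zlim = 0 from Set.indicator_of_notMem h _,
      show f n (zseq (n + 1)) = 1 from Set.indicator_of_mem hz_mem _] at heq
    simp at heq
  have : zlim ∈ ⋂ n, A n := mem_iInter.mpr hmem
  rw [hempty] at this
  exact this

end ProdContentAux
/-- The additive content on measurable cylinders induced by the finite products of a family
of probability measures tends to `0` along every non-increasing sequence of measurable
cylinders with empty intersection; consequently it is σ-sub-additive on measurable
cylinders. -/
theorem tendsto_zero_and_sigma_subadditive_prodContent
    {ι : Type*} {X : ι → Type*} [∀ i, MeasurableSpace (X i)]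
    (μ : ∀ i, Measure (X i)) [∀ i, IsProbabilityMeasure (μ i)]
    (m : AddContent ℝ≥0∞ (measurableCylinders X))
    (hm : ∀ (I : Finset ι) (A : Set (∀ i : I, X i)), MeasurableSet A →
      m (cylinder I A) = Measure.pi (fun i : I ↦ μ i) A) :
    (∀ A : ℕ → Set (Π i, X i), (∀ n, A n ∈ measurableCylinders X) → Antitone A →
      (⋂ n, A n) = ∅ → Tendsto (fun n ↦ m (A n)) atTop (𝓝 0)) ∧
    (∀ A : ℕ → Set (Π i, X i), (∀ n, A n ∈ measurableCylinders X) →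
      (⋃ n, A n) ∈ measurableCylinders X →
      m (⋃ n, A n) ≤ ∑' n, m (A n)) := by
  classical
  have part1 : ∀ A : ℕ → Set (Π i, X i), (∀ n, A n ∈ measurableCylinders X) → Antitone A →
      (⋂ n, A n) = ∅ → Tendsto (fun n ↦ m (A n)) atTop (𝓝 0) :=
    fun A hA hanti hempty => ProdContentAux.tendsto_zero μ m hm A hA hanti hempty
  refine ⟨part1, fun A hA hU => ?_⟩
  have hring := ProdContentAux.isSetRing_measurableCylinders (X := X)
  set B : ℕ → Set (Π i, X i) := fun n => (⋃ k, A k) \ (⋃ k ∈ Finset.range (n + 1), A k)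
    with hB_def
  have hpart : ∀ n, (⋃ k ∈ Finset.range (n + 1), A k) ∈ measurableCylinders X :=
    fun n => hring.biUnion_mem _ fun k _ => hA k
  have hBmem : ∀ n, B n ∈ measurableCylinders X := fun n => hring.sdiff_mem hU (hpart n)
  have hBanti : Antitone B := by
    intro a b hab
    refine Set.diff_subset_diff_right ?_
    refine Set.biUnion_subset_biUnion_left ?_
    intro k hk
    have hk' : k ∈ Finset.range (a + 1) := hk
    have : k ∈ Finset.range (b + 1) := by
      simp only [Finset.mem_range] at hk' ⊢
      omega
    exact this
  have hBempty : ⋂ n, B n = ∅ := by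
    ext x
    simp only [Set.mem_iInter, Set.mem_empty_iff_false, iff_false, not_forall]
    by_cases hx : x ∈ ⋃ k, A k
    · obtain ⟨k, hk⟩ := Set.mem_iUnion.mp hx
      refine ⟨k, fun h => h.2 ?_⟩
      exact Set.mem_biUnion (Finset.self_mem_range_succ k) hk
    · exact ⟨0, fun h => hx h.1⟩
  have htd : Tendsto (fun n ↦ m (B n)) atTop (𝓝 0) := part1 B hBmem hBanti hBempty
  have hbound : ∀ n, m (⋃ k, A k) ≤ (∑ k ∈ Finset.range (n + 1), m (A k)) + m (B n) := by
    intro n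
    have hsplit : (⋃ k, A k) ⊆ (⋃ k ∈ Finset.range (n + 1), A k) ∪ B n := by
      intro x hx
      by_cases hx' : x ∈ ⋃ k ∈ Finset.range (n + 1), A k
      · exact Or.inl hx'
      · exact Or.inr ⟨hx, hx'⟩
    calc m (⋃ k, A k) ≤ m ((⋃ k ∈ Finset.range (n + 1), A k) ∪ B n) :=
          addContent_mono hring.isSetSemiring hU (hring.union_mem (hpart n) (hBmem n)) hsplit
      _ ≤ m (⋃ k ∈ Finset.range (n + 1), A k) + m (B n) :=
          addContent_union_le hring (hpart n) (hBmem n)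
      _ ≤ (∑ k ∈ Finset.range (n + 1), m (A k)) + m (B n) :=
          add_le_add_left (addContent_biUnion_le hring fun k _ => hA k) _
  have hlim : Tendsto (fun n => (∑ k ∈ Finset.range (n + 1), m (A k)) + m (B n)) atTop
      (𝓝 ((∑' k, m (A k)) + 0)) := by
    refine Tendsto.add ?_ htd
    exact (ENNReal.tendsto_nat_tsum fun k => m (A k)).comp (tendsto_add_atTop_nat 1)
  have := ge_of_tendsto hlim (Filter.Eventually.of_forall hbound)
  rwa [add_zero] at this
end
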